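/- Let (τ_s)_{s∈I} be a countable family of independent exponential random variables, τ_s with rate λ_s > 0, where Σ_{s∈I} λ_s < ∞. Then almost surely inf_{s∈I} τ_s > 0, the infimum is attained at a unique index, and T = inf_s τ_s is exponentially distributed with rate Σ_s λ_s. -/

import Mathlib

open MeasureTheory ProbabilityTheory Filter Topology

section Aux

variable {Ω : Type*} [MeasurableSpace Ω] {P : Measure Ω} [IsProbabilityMeasure P]
    {I : Type*} [Countable I] [Nonempty I]
    {τ : I → Ω → ℝ} {lam : I → ℝ}

/-- Survival function of the minimum over a finite set of indices. -/
lemma aux_fin (hindep : iIndepFun τ P)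
    (hexp : ∀ i, ∀ s : ℝ, 0 ≤ s →
      P {ω | s < τ i ω} = ENNReal.ofReal (Real.exp (-(lam i) * s)))
    (F : Finset I) (s : ℝ) (hs : 0 ≤ s) :
    P (⋂ i ∈ F, {ω | s < τ i ω}) = ENNReal.ofReal (Real.exp (-(∑ i ∈ F, lam i) * s)) := by
  rw [hindep.meas_biInter (s := fun i => {ω | s < τ i ω})
    (fun i _ => ⟨Set.Ioi s, measurableSet_Ioi, rfl⟩)]
  rw [Finset.prod_congr rfl (fun i _ => hexp i s hs),
    ← ENNReal.ofReal_prod_of_nonneg (fun i _ => (Real.exp_pos _).le)]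
  congr 1
  rw [← Real.exp_sum]
  congr 1
  simp [neg_mul, Finset.sum_mul, Finset.sum_neg_distrib]

/-- Survival function of the infimum as a countable intersection. -/
lemma aux_all (hsum : Summable lam) (hmeas : ∀ i, Measurable (τ i))
    (hindep : iIndepFun τ P)
    (hexp : ∀ i, ∀ s : ℝ, 0 ≤ s →
      P {ω | s < τ i ω} = ENNReal.ofReal (Real.exp (-(lam i) * s)))
    (s : ℝ) (hs : 0 ≤ s) :
    P (⋂ i, {ω | s < τ i ω}) = ENNReal.ofReal (Real.exp (-(∑' i, lam i) * s)) := by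
  have hfin := aux_fin hindep hexp
  obtain ⟨e, he⟩ := exists_surjective_nat I
  classical
  set F : ℕ → Finset I := fun n => (Finset.range (n + 1)).image e with hF
  have hFmono : Monotone F := fun a b hab =>
    Finset.image_subset_image (Finset.range_subset_range.2 (by omega : a + 1 ≤ b + 1))
  have hFmem : ∀ i, ∃ n, i ∈ F n := by
    intro i
    obtain ⟨n, rfl⟩ := he i
    exact ⟨n, Finset.mem_image.2 ⟨n, Finset.self_mem_range_succ n, rfl⟩⟩
  set B : ℕ → Set Ω := fun n => ⋂ i ∈ F n, {ω | s < τ i ω} with hB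
  have hBanti : Antitone B := by
    intro a b hab ω hω
    simp only [hB, Set.mem_iInter] at hω ⊢
    exact fun i hi => hω i (hFmono hab hi)
  have hBeq : ⋂ n, B n = ⋂ i, {ω | s < τ i ω} := by
    ext ω
    simp only [hB, Set.mem_iInter]
    constructor
    · intro h i
      obtain ⟨n, hn⟩ := hFmem i
      exact h n i hn
    · exact fun h n i _ => h i
  have hAmeas : ∀ (i : I), MeasurableSet {ω | s < τ i ω} :=
    fun i => measurableSet_lt measurable_const (hmeas i)
  have h1 : Tendsto (P ∘ B) atTop (𝓝 (P (⋂ n, B n))) :=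
    tendsto_measure_iInter_atTop
      (fun n => ((F n).measurableSet_biInter (fun i _ => hAmeas i)).nullMeasurableSet)
      hBanti ⟨0, measure_ne_top _ _⟩
  have h2 : Tendsto (fun n => ∑ i ∈ F n, lam i) atTop (𝓝 (∑' i, lam i)) :=
    hsum.hasSum.comp (hFmono.tendsto_atTop_finset hFmem)
  have h3 : Tendsto (fun n => ENNReal.ofReal (Real.exp (-(∑ i ∈ F n, lam i) * s))) atTop
      (𝓝 (ENNReal.ofReal (Real.exp (-(∑' i, lam i) * s)))) :=
    (ENNReal.continuous_ofReal.tendsto _).comp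
      ((Real.continuous_exp.tendsto _).comp (h2.neg.mul_const s))
  have h4 : P ∘ B = fun n => ENNReal.ofReal (Real.exp (-(∑ i ∈ F n, lam i) * s)) :=
    funext fun n => hfin (F n) s hs
  rw [h4] at h1
  rw [← hBeq]
  exact tendsto_nhds_unique h1 h3

/-- The survival function of the infimum. -/
lemma aux_surv (hsum : Summable lam) (hmeas : ∀ i, Measurable (τ i))
    (hindep : iIndepFun τ P)
    (hexp : ∀ i, ∀ s : ℝ, 0 ≤ s →
      P {ω | s < τ i ω} = ENNReal.ofReal (Real.exp (-(lam i) * s)))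
    (s : ℝ) (hs : 0 ≤ s) :
    P {ω | s < ⨅ i, τ i ω} = ENNReal.ofReal (Real.exp (-(∑' i, lam i) * s)) := by
  have hall := aux_all hsum hmeas hindep hexp
  apply le_antisymm
  · rw [← hall s hs]
    apply measure_mono
    intro ω hω
    simp only [Set.mem_setOf_eq] at hω
    rw [Set.mem_iInter]
    intro i
    by_cases hb : BddBelow (Set.range fun j => τ j ω)
    · exact lt_of_lt_of_le hω (ciInf_le hb i)
    · rw [Real.iInf_of_not_bddBelow hb] at hω
      exact absurd hω (not_lt.2 hs)
  · have hle : ∀ n : ℕ, ENNReal.ofReal (Real.exp (-(∑' i, lam i) * (s + 1 / (n + 1)))) ≤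
        P {ω | s < ⨅ i, τ i ω} := by
      intro n
      rw [← hall (s + 1 / (n + 1)) (by positivity)]
      apply measure_mono
      intro ω hω
      simp only [Set.mem_iInter, Set.mem_setOf_eq] at hω ⊢
      have h1 : s + 1 / ((n : ℝ) + 1) ≤ ⨅ i, τ i ω := le_ciInf fun i => (hω i).le
      have h2 : s < s + 1 / ((n : ℝ) + 1) := by
        have : (0 : ℝ) < 1 / ((n : ℝ) + 1) := by positivity
        linarith
      exact lt_of_lt_of_le h2 h1
    have ht : Tendsto (fun n : ℕ => ENNReal.ofReal (Real.exp (-(∑' i, lam i) * (s + 1 / (n + 1)))))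
        atTop (𝓝 (ENNReal.ofReal (Real.exp (-(∑' i, lam i) * s)))) := by
      have h0 : Tendsto (fun n : ℕ => s + 1 / ((n : ℝ) + 1)) atTop (𝓝 s) := by
        have := tendsto_one_div_add_atTop_nhds_zero_nat (𝕜 := ℝ)
        have := (tendsto_const_nhds (x := s) (f := atTop (α := ℕ))).add this
        simpa using this
      exact (ENNReal.continuous_ofReal.tendsto _).comp
        ((Real.continuous_exp.tendsto _).comp (h0.const_mul _))
    exact le_of_tendsto ht (Eventually.of_forall hle)

/-- Almost surely the infimum is positive. -/
lemma aux_pos (hsum : Summable lam) (hmeas : ∀ i, Measurable (τ i))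
    (hindep : iIndepFun τ P)
    (hexp : ∀ i, ∀ s : ℝ, 0 ≤ s →
      P {ω | s < τ i ω} = ENNReal.ofReal (Real.exp (-(lam i) * s))) :
    ∀ᵐ ω ∂P, 0 < ⨅ i, τ i ω := by
  have hall := aux_all hsum hmeas hindep hexp
  set G : Set Ω := ⋃ n : ℕ, ⋂ i, {ω | 1 / ((n : ℝ) + 1) < τ i ω} with hG
  have hGmeas : MeasurableSet G :=
    MeasurableSet.iUnion fun n => MeasurableSet.iInter fun i =>
      measurableSet_lt measurable_const (hmeas i)
  have hGsub : G ⊆ {ω | 0 < ⨅ i, τ i ω} := by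
    intro ω hω
    simp only [hG, Set.mem_iUnion, Set.mem_iInter, Set.mem_setOf_eq] at hω ⊢
    obtain ⟨n, hn⟩ := hω
    have h1 : 1 / ((n : ℝ) + 1) ≤ ⨅ i, τ i ω := le_ciInf fun i => (hn i).le
    have h2 : (0 : ℝ) < 1 / ((n : ℝ) + 1) := by positivity
    exact lt_of_lt_of_le h2 h1
  have hG1 : P G = 1 := by
    refine le_antisymm prob_le_one ?_
    have hle : ∀ n : ℕ, ENNReal.ofReal (Real.exp (-(∑' i, lam i) * (1 / (n + 1)))) ≤ P G := by
      intro n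
      rw [← hall (1 / (n + 1)) (by positivity)]
      exact measure_mono (Set.subset_iUnion (fun n : ℕ => ⋂ i, {ω | 1 / ((n : ℝ) + 1) < τ i ω}) n)
    have ht : Tendsto (fun n : ℕ => ENNReal.ofReal (Real.exp (-(∑' i, lam i) * (1 / (n + 1)))))
        atTop (𝓝 1) := by
      have h0 : Tendsto (fun n : ℕ => 1 / ((n : ℝ) + 1)) atTop (𝓝 0) :=
        tendsto_one_div_add_atTop_nhds_zero_nat
      have := (ENNReal.continuous_ofReal.tendsto _).comp
        ((Real.continuous_exp.tendsto _).comp (h0.const_mul (-(∑' i, lam i))))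
      simpa [Function.comp_def] using this
    exact le_of_tendsto ht (Eventually.of_forall hle)
  have hGc : P Gᶜ = 0 := by
    rw [measure_compl hGmeas (measure_ne_top _ _), hG1, measure_univ, tsub_self]
  rw [ae_iff]
  exact measure_mono_null (fun ω hω => fun hG' => hω (hGsub hG')) hGc

/-- Independent random variables with continuous distributions are a.s. distinct. -/
lemma aux_ties (hmeas : ∀ i, Measurable (τ i))
    (hindep : iIndepFun τ P)
    (hexp : ∀ i, ∀ s : ℝ, 0 ≤ s →
      P {ω | s < τ i ω} = ENNReal.ofReal (Real.exp (-(lam i) * s)))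
    (i j : I) (hij : i ≠ j) :
    P {ω | τ i ω = τ j ω} = 0 := by
  have hAmeas : ∀ (k : I) (s : ℝ), MeasurableSet {ω | s < τ k ω} :=
    fun k s => measurableSet_lt measurable_const (hmeas k)
  have hatom : ∀ (k : I) (c : ℝ), P {ω | τ k ω = c} = 0 := by
    intro k c
    rcases le_or_gt c 0 with hc | hc
    · have h0 : P {ω | 0 < τ k ω} = 1 := by simpa using hexp k 0 le_rfl
      have hcompl : P ({ω | 0 < τ k ω}ᶜ) = 0 := by
        rw [measure_compl (hAmeas k 0) (measure_ne_top _ _), h0, measure_univ, tsub_self]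
      refine measure_mono_null ?_ hcompl
      intro ω hω
      simp only [Set.mem_setOf_eq] at hω
      simp only [Set.mem_compl_iff, Set.mem_setOf_eq, not_lt]
      rw [hω]; exact hc
    · have key : ∀ n : ℕ, P {ω | τ k ω = c} ≤
          ENNReal.ofReal (Real.exp (-(lam k) * (c - c / ((n : ℝ) + 1)))
            - Real.exp (-(lam k) * c)) := by
        intro n
        have hcn : (0 : ℝ) ≤ c - c / ((n : ℝ) + 1) := by
          have h1 : c / ((n : ℝ) + 1) ≤ c / 1 := by
            apply div_le_div_of_nonneg_left hc.le one_pos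
            · have : (0:ℝ) ≤ (n : ℝ) := n.cast_nonneg
              linarith
          simp only [div_one] at h1
          linarith
        have hdisj : Disjoint {ω | τ k ω = c} {ω | c < τ k ω} := by
          rw [Set.disjoint_left]
          intro ω h1 h2
          simp only [Set.mem_setOf_eq] at h1 h2
          rw [h1] at h2; exact lt_irrefl c h2
        have hsub : {ω | τ k ω = c} ∪ {ω | c < τ k ω} ⊆
            {ω | c - c / ((n : ℝ) + 1) < τ k ω} := by
          intro ω hω
          have hlt : c - c / ((n : ℝ) + 1) < c := by
            have : (0:ℝ) < c / ((n : ℝ) + 1) := by positivity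
            linarith
          rcases hω with hω | hω
          · simp only [Set.mem_setOf_eq] at hω ⊢; rw [hω]; exact hlt
          · simp only [Set.mem_setOf_eq] at hω ⊢; exact lt_trans hlt hω
        have hadd : P {ω | τ k ω = c} + P {ω | c < τ k ω} ≤
            P {ω | c - c / ((n : ℝ) + 1) < τ k ω} := by
          rw [← measure_union hdisj (hAmeas k c)]
          exact measure_mono hsub
        rw [hexp k c hc.le, hexp k _ hcn] at hadd
        have := ENNReal.le_sub_of_add_le_right ENNReal.ofReal_ne_top hadd
        rwa [← ENNReal.ofReal_sub _ (Real.exp_pos _).le] at this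
      have ht : Tendsto (fun n : ℕ => ENNReal.ofReal (Real.exp (-(lam k) * (c - c / ((n : ℝ) + 1)))
          - Real.exp (-(lam k) * c))) atTop (𝓝 0) := by
        have h1 : Tendsto (fun n : ℕ => c / ((n : ℝ) + 1)) atTop (𝓝 0) := by
          simpa [div_eq_mul_inv] using tendsto_one_div_add_atTop_nhds_zero_nat.const_mul c
        have h0 : Tendsto (fun n : ℕ => c - c / ((n : ℝ) + 1)) atTop (𝓝 c) := by
          simpa using (tendsto_const_nhds (x := c) (f := atTop (α := ℕ))).sub h1
        have := (ENNReal.continuous_ofReal.tendsto _).comp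
          (((Real.continuous_exp.tendsto _).comp (h0.const_mul (-(lam k)))).sub
            (tendsto_const_nhds (x := Real.exp (-(lam k) * c))))
        simpa [Function.comp_def] using this
      exact le_zero_iff.mp (ge_of_tendsto ht (Eventually.of_forall key))
  have hIndep : IndepFun (τ i) (τ j) P := hindep.indepFun hij
  have hmap : P.map (fun ω => (τ i ω, τ j ω)) = (P.map (τ i)).prod (P.map (τ j)) :=
    (indepFun_iff_map_prod_eq_prod_map_map (hmeas i).aemeasurable (hmeas j).aemeasurable).mp hIndep
  have hdiag : MeasurableSet {p : ℝ × ℝ | p.1 = p.2} :=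
    measurableSet_eq_fun measurable_fst measurable_snd
  haveI : IsFiniteMeasure (P.map (τ j)) := by
    constructor
    rw [Measure.map_apply (hmeas j) MeasurableSet.univ]
    simp
  have heq : {ω | τ i ω = τ j ω} = (fun ω => (τ i ω, τ j ω)) ⁻¹' {p : ℝ × ℝ | p.1 = p.2} := rfl
  rw [heq, ← Measure.map_apply ((hmeas i).prodMk (hmeas j)) hdiag, hmap,
    Measure.prod_apply hdiag]
  have hzero : ∀ x : ℝ, (P.map (τ j)) (Prod.mk x ⁻¹' {p : ℝ × ℝ | p.1 = p.2}) = 0 := by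
    intro x
    have hpre : Prod.mk x ⁻¹' {p : ℝ × ℝ | p.1 = p.2} = {x} := by
      ext y; simp [eq_comm]
    rw [hpre, Measure.map_apply (hmeas j) (measurableSet_singleton x)]
    exact hatom j x
  simp only [hzero]
  simp

/-- Borel–Cantelli: a.s. only finitely many of the `τ i` are below any given level. -/
lemma aux_bc (hpos : ∀ i, 0 < lam i) (hsum : Summable lam) (hmeas : ∀ i, Measurable (τ i))
    (hexp : ∀ i, ∀ s : ℝ, 0 ≤ s →
      P {ω | s < τ i ω} = ENNReal.ofReal (Real.exp (-(lam i) * s)))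
    (q : ℝ) (hq : 0 ≤ q) :
    ∀ᵐ ω ∂P, {i | τ i ω ≤ q}.Finite := by
  have hAmeas : ∀ (k : I) (s : ℝ), MeasurableSet {ω | s < τ k ω} :=
    fun k s => measurableSet_lt measurable_const (hmeas k)
  rcases finite_or_infinite I with hI | hI
  · exact Eventually.of_forall fun ω => Set.toFinite _
  · obtain ⟨e⟩ : Nonempty (ℕ ≃ I) := by
      obtain ⟨d⟩ := nonempty_denumerable I
      exact ⟨(Denumerable.eqv I).symm⟩
    set C : ℕ → Set Ω := fun n => {ω | τ (e n) ω ≤ q} with hC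
    have hCle : ∀ n, P (C n) ≤ ENNReal.ofReal (lam (e n) * q) := by
      intro n
      have h1 : P (C n) = 1 - P {ω | q < τ (e n) ω} := by
        have hCc : C n = {ω | q < τ (e n) ω}ᶜ := by
          ext ω; simp [hC, not_lt]
        rw [hCc, measure_compl (hAmeas (e n) q) (measure_ne_top _ _), measure_univ]
      rw [h1, hexp (e n) q hq]
      calc 1 - ENNReal.ofReal (Real.exp (-(lam (e n)) * q))
          = ENNReal.ofReal (1 - Real.exp (-(lam (e n)) * q)) := by
            rw [← ENNReal.ofReal_one, ← ENNReal.ofReal_sub _ (Real.exp_pos _).le]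
        _ ≤ ENNReal.ofReal (lam (e n) * q) := by
            apply ENNReal.ofReal_le_ofReal
            nlinarith [Real.add_one_le_exp (-(lam (e n)) * q)]
    have hsum' : ∑' n, P (C n) ≠ ⊤ := by
      have h2 : Summable fun n => lam (e n) * q := (e.summable_iff.mpr hsum).mul_right q
      have h3 : ∑' n, ENNReal.ofReal (lam (e n) * q) ≠ ⊤ := by
        rw [← ENNReal.ofReal_tsum_of_nonneg (fun n => mul_nonneg (hpos _).le hq) h2]
        exact ENNReal.ofReal_ne_top
      exact ne_top_of_le_ne_top h3 (ENNReal.tsum_le_tsum hCle)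
    have hBC := measure_limsup_atTop_eq_zero hsum'
    rw [ae_iff]
    refine measure_mono_null ?_ hBC
    intro ω hω
    simp only [Set.mem_setOf_eq] at hω
    rw [Filter.mem_limsup_iff_frequently_mem, frequently_atTop]
    intro N
    have hinf : {n : ℕ | τ (e n) ω ≤ q}.Infinite := by
      have hpre : e ⁻¹' {i | τ i ω ≤ q} = {n : ℕ | τ (e n) ω ≤ q} := rfl
      rw [← hpre]
      have hSinf : {i | τ i ω ≤ q}.Infinite := hω
      exact hSinf.preimage (by rw [Equiv.range_eq_univ]; exact Set.subset_univ _)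
    obtain ⟨n, hn, hNn⟩ := hinf.exists_gt N
    exact ⟨n, hNn.le, hn⟩

/-- Pointwise: if only finitely many values are below each integer level and all values are
distinct, then the infimum is attained at a unique index. -/
lemma aux_unique {ω : Ω}
    (hfin : ∀ n : ℕ, {i | τ i ω ≤ (n : ℝ)}.Finite)
    (hne : ∀ i j, i ≠ j → τ i ω ≠ τ j ω) :
    ∃! i, τ i ω = ⨅ j, τ j ω := by
  obtain ⟨i0⟩ : Nonempty I := inferInstance
  set n : ℕ := ⌈τ i0 ω⌉₊ with hn
  have hi0 : i0 ∈ {i | τ i ω ≤ (n : ℝ)} := by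
    simp only [Set.mem_setOf_eq, hn]
    exact Nat.le_ceil _
  obtain ⟨i', hi'S, hmin⟩ := Set.exists_min_image _ (fun i => τ i ω) (hfin n) ⟨i0, hi0⟩
  have hglobal : ∀ j, τ i' ω ≤ τ j ω := by
    intro j
    by_cases hj : j ∈ {i | τ i ω ≤ (n : ℝ)}
    · exact hmin j hj
    · have h1 : (n : ℝ) < τ j ω := lt_of_not_ge hj
      have h2 : τ i' ω ≤ (n : ℝ) := hi'S
      linarith
  have hbdd : BddBelow (Set.range fun j => τ j ω) := by
    refine ⟨τ i' ω, ?_⟩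
    rintro x ⟨j, rfl⟩
    exact hglobal j
  have hinf : ⨅ j, τ j ω = τ i' ω :=
    le_antisymm (ciInf_le hbdd i') (le_ciInf hglobal)
  refine ⟨i', hinf.symm, ?_⟩
  intro j hj
  by_contra hji
  exact hne j i' hji (by rw [hj, hinf])

end Aux

/-- For a countable family of independent exponential random variables `τ_i` with rates
`λ_i > 0` and `Σ λ_i < ∞`: almost surely `inf_i τ_i > 0` and the infimum is attained at
a unique index; moreover `T = inf_i τ_i` is exponential with rate `Σ λ_i`. -/
theorem stmt_18 {Ω : Type*} [MeasurableSpace Ω] (P : Measure Ω) [IsProbabilityMeasure P]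
    {I : Type*} [Countable I] [Nonempty I]
    (τ : I → Ω → ℝ) (lam : I → ℝ) (hpos : ∀ i, 0 < lam i) (hsum : Summable lam)
    (hmeas : ∀ i, Measurable (τ i))
    (hindep : iIndepFun τ P)
    (hexp : ∀ i, ∀ s : ℝ, 0 ≤ s →
      P {ω | s < τ i ω} = ENNReal.ofReal (Real.exp (-(lam i) * s))) :
    (∀ᵐ ω ∂P, 0 < ⨅ i, τ i ω) ∧
      (∀ᵐ ω ∂P, ∃! i, τ i ω = ⨅ j, τ j ω) ∧
      ∀ s : ℝ, 0 ≤ s →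
        P {ω | s < ⨅ i, τ i ω} = ENNReal.ofReal (Real.exp (-(∑' i, lam i) * s)) := by
  refine ⟨aux_pos hsum hmeas hindep hexp, ?_, aux_surv hsum hmeas hindep hexp⟩
  have hfinAE : ∀ᵐ ω ∂P, ∀ n : ℕ, {i | τ i ω ≤ (n : ℝ)}.Finite :=
    ae_all_iff.mpr fun n => aux_bc hpos hsum hmeas hexp n n.cast_nonneg
  have htiesAE : ∀ᵐ ω ∂P, ∀ i j, i ≠ j → τ i ω ≠ τ j ω := by
    rw [ae_all_iff]
    intro i
    rw [ae_all_iff]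
    intro j
    by_cases hij : i = j
    · exact Eventually.of_forall fun ω h => absurd hij h
    · rw [ae_iff]
      refine measure_mono_null ?_ (aux_ties hmeas hindep hexp i j hij)
      intro ω hω
      simp only [Set.mem_setOf_eq, Classical.not_imp, not_not] at hω
      exact hω.2
  filter_upwards [hfinAE, htiesAE] with ω hfin hne
  exact aux_unique hfin hne
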